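/- Let C be a regular category in which all regular epimorphisms split, and T a monad on C. Then the Eilenberg–Moore category C^T is regular, and a morphism of T-algebras is a regular epimorphism in C^T if and only if its underlying morphism in C is a regular epimorphism. -/

import Mathlib

open CategoryTheory Limits

universe v u

namespace CorelPaper

/-- A regular category: finitely complete, with coequalizers of kernel pairs,
in which regular epimorphisms are stable under pullback. -/
structure IsRegularCat (D : Type u) [Category.{v} D] : Prop where
  hasFiniteLimits : HasFiniteLimits D
  hasCoeqOfKernelPairs : ∀ {R X Y : D} (f : X ⟶ Y) (a b : R ⟶ X),
    IsKernelPair f a b → HasCoequalizer a b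
  regularEpiStable : ∀ {P X Y Z : D} (fst : P ⟶ X) (snd : P ⟶ Y) (f : X ⟶ Z) (g : Y ⟶ Z),
    IsPullback fst snd f g → Nonempty (RegularEpi f) → Nonempty (RegularEpi snd)

section Aux

variable {C : Type u} [Category.{v} C]

/-- If `(a, b)` is a kernel pair of `h`, `π` coequalizes `(a, b)`, `π` admits a
section, and `h` factors through `π`, then `π` is a split coequalizer of `(a, b)`. -/
noncomputable def splitCoeqAux {R X Y Z : C} {h : X ⟶ Y} {a b : R ⟶ X}
    (hk : IsKernelPair h a b) {π : X ⟶ Z} (hcond : a ≫ π = b ≫ π)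
    {s : Z ⟶ X} (hs : s ≫ π = 𝟙 Z) {m : Z ⟶ Y} (hm : π ≫ m = h) :
    IsSplitCoequalizer a b π where
  rightSection := s
  leftSection := hk.lift (π ≫ s) (𝟙 X) (by
    rw [← hm, Category.id_comp, Category.assoc, ← Category.assoc s, hs, Category.id_comp])
  condition := hcond
  rightSection_π := hs
  leftSection_bottom := hk.lift_snd _ _ _
  leftSection_top := hk.lift_fst _ _ _

lemma preservesColimit_parallelPair_of_isSplitCoequalizer {D : Type*} [Category D]
    {X Y Z : C} {u v : X ⟶ Y} {π : Y ⟶ Z} (h : IsSplitCoequalizer u v π) (F : C ⥤ D) :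
    PreservesColimit (parallelPair u v) F :=
  preservesColimit_of_preserves_colimit_cocone h.isCoequalizer
    ((isColimitMapCoconeCoforkEquiv F h.condition).symm (h.map F).isCoequalizer)

/-- If the images of a pair of parallel morphisms of algebras admit a split
coequalizer in `C`, then the forgetful functor creates their coequalizer. -/
lemma createsColimit_aux {T : Monad C} {R A : T.Algebra} (a b : R ⟶ A) {Z : C}
    {π : A.A ⟶ Z} (h : IsSplitCoequalizer a.f b.f π) :
    Nonempty (CreatesColimit (parallelPair a b) T.forget) := by
  haveI : PreservesColimit (parallelPair a.f b.f) (T : C ⥤ C) :=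
    preservesColimit_parallelPair_of_isSplitCoequalizer h _
  haveI : PreservesColimit (parallelPair (T.toFunctor.map a.f) (T.toFunctor.map b.f))
      (T : C ⥤ C) :=
    preservesColimit_parallelPair_of_isSplitCoequalizer (h.map T.toFunctor) _
  haveI : PreservesColimit (parallelPair a b ⋙ T.forget) (T : C ⥤ C) :=
    preservesColimit_of_iso_diagram (K₁ := parallelPair a.f b.f) _
      (diagramIsoParallelPair (parallelPair a b ⋙ T.forget)).symm
  haveI : PreservesColimit ((parallelPair a b ⋙ T.forget) ⋙ (T : C ⥤ C)) (T : C ⥤ C) :=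
    preservesColimit_of_iso_diagram
      (K₁ := parallelPair (T.toFunctor.map a.f) (T.toFunctor.map b.f)) _
      (diagramIsoParallelPair ((parallelPair a b ⋙ T.forget) ⋙ (T : C ⥤ C))).symm
  exact ⟨Monad.forgetCreatesColimit _⟩

end Aux

/-- Let `C` be a regular category in which every regular
epimorphism splits, and let `T` be a monad on `C`. Then the Eilenberg–Moore
category `C^T` is regular, and a morphism of `T`-algebras is a regular
epimorphism in `C^T` iff its underlying morphism in `C` is a regular
epimorphism. -/
theorem eilenbergMoore_regular {C : Type u} [Category.{v} C] (hC : IsRegularCat C)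
    (hsplit : ∀ {X Y : C} (f : X ⟶ Y), Nonempty (RegularEpi f) →
      ∃ s : Y ⟶ X, s ≫ f = 𝟙 Y)
    (T : Monad C) :
    IsRegularCat T.Algebra ∧
    ∀ {A B : T.Algebra} (f : A ⟶ B),
      Nonempty (RegularEpi f) ↔ Nonempty (RegularEpi f.f) := by
  haveI := hC.hasFiniteLimits
  -- `C^T` has finite limits since the forgetful functor creates limits.
  haveI hfl : HasFiniteLimits T.Algebra :=
    ⟨fun J _ _ => hasLimitsOfShape_of_hasLimitsOfShape_createsLimitsOfShape T.forget⟩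
  -- The forgetful functor preserves pullbacks.
  have mapPB : ∀ {P X Y Z : T.Algebra} (fst : P ⟶ X) (snd : P ⟶ Y) (f : X ⟶ Z) (g : Y ⟶ Z),
      IsPullback fst snd f g → IsPullback fst.f snd.f f.f g.f := by
    intro P X Y Z fst snd f g hpb
    haveI : PreservesLimit (cospan f g) T.forget :=
      preservesLimit_of_createsLimit_and_hasLimit _ _
    exact T.forget.map_isPullback hpb
  -- The key device: given a kernel pair in `C^T`, get a split coequalizer in `C`.
  have key : ∀ {R A B : T.Algebra} (f : A ⟶ B) (a b : R ⟶ A), IsKernelPair f a b →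
      ∃ (Z : C) (π : A.A ⟶ Z), Nonempty (IsSplitCoequalizer a.f b.f π) := by
    intro R A B f a b hk
    have hkC : IsKernelPair f.f a.f b.f := mapPB a b f f hk
    haveI : HasCoequalizer a.f b.f := hC.hasCoeqOfKernelPairs f.f a.f b.f hkC
    obtain ⟨s, hs⟩ := hsplit (coequalizer.π a.f b.f) ⟨coequalizerRegular a.f b.f⟩
    exact ⟨_, coequalizer.π a.f b.f,
      ⟨splitCoeqAux hkC (coequalizer.condition _ _) hs
        (coequalizer.π_desc f.f hkC.w)⟩⟩
  -- Coequalizers of kernel pairs in `C^T`.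
  have hcoeq : ∀ {R X Y : T.Algebra} (f : X ⟶ Y) (a b : R ⟶ X),
      IsKernelPair f a b → HasCoequalizer a b := by
    intro R X Y f a b hk
    obtain ⟨Z, π, ⟨hsc⟩⟩ := key f a b hk
    obtain ⟨inst⟩ := createsColimit_aux a b hsc
    haveI := inst
    haveI : HasColimit (parallelPair a.f b.f) :=
      HasColimit.mk ⟨_, hsc.isCoequalizer⟩
    haveI : HasColimit (parallelPair a b ⋙ T.forget) :=
      hasColimit_of_iso (G := parallelPair a b ⋙ T.forget)
        (F := parallelPair a.f b.f) (diagramIsoParallelPair (parallelPair a b ⋙ T.forget))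
    exact hasColimit_of_created _ T.forget
  -- The characterization of regular epimorphisms in `C^T`.
  have iff_reg : ∀ {A B : T.Algebra} (f : A ⟶ B),
      Nonempty (RegularEpi f) ↔ Nonempty (RegularEpi f.f) := by
    intro A B f
    obtain ⟨R, a, b, hk⟩ : ∃ (R : T.Algebra) (a b : R ⟶ A), IsKernelPair f a b :=
      ⟨pullback f f, pullback.fst f f, pullback.snd f f, IsPullback.of_hasPullback f f⟩
    have hkC : IsKernelPair f.f a.f b.f := mapPB a b f f hk
    constructor
    · rintro ⟨hf⟩
      obtain ⟨Z, π, ⟨hsc⟩⟩ := key f a b hk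
      obtain ⟨inst⟩ := createsColimit_aux a b hsc
      haveI := inst
      haveI : HasColimit (parallelPair a.f b.f) :=
        HasColimit.mk ⟨_, hsc.isCoequalizer⟩
      haveI : HasColimit (parallelPair a b ⋙ T.forget) :=
        hasColimit_of_iso (G := parallelPair a b ⋙ T.forget)
          (F := parallelPair a.f b.f) (diagramIsoParallelPair (parallelPair a b ⋙ T.forget))
      haveI : HasColimit (parallelPair a b) := hasColimit_of_created _ T.forget
      haveI : PreservesColimit (parallelPair a b) T.forget :=
        preservesColimit_of_createsColimit_and_hasColimit _ _
      haveI := hf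
      have hcolim : IsColimit (Cofork.ofπ f hk.w) := hk.toCoequalizer hf
      exact ⟨⟨R.A, a.f, b.f, hkC.w,
        isColimitCoforkMapOfIsColimit T.forget hk.w hcolim⟩⟩
    · rintro ⟨hff⟩
      obtain ⟨s, hs⟩ := hsplit f.f ⟨hff⟩
      have hsc : IsSplitCoequalizer a.f b.f f.f :=
        splitCoeqAux hkC hkC.w hs (Category.comp_id f.f)
      obtain ⟨inst⟩ := createsColimit_aux a b hsc
      haveI := inst
      have hcolim : IsColimit (Cofork.ofπ f hk.w) :=
        isColimitOfIsColimitCoforkMap T.forget hk.w hsc.isCoequalizer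
      exact ⟨⟨R, a, b, hk.w, hcolim⟩⟩
  refine ⟨⟨hfl, hcoeq, ?_⟩, iff_reg⟩
  intro P X Y Z fst snd f g hpb hf
  exact (iff_reg snd).2 (hC.regularEpiStable fst.f snd.f f.f g.f (mapPB fst snd f g hpb)
    ((iff_reg f).1 hf))

end CorelPaper
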